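/- Let φ : [0,∞) → [0,∞) be an increasing, convex, non-constant function, let m be a positive integer, and set F_m(t) = ∫_t^∞ (r - t)^m e^{-φ(r)} dr. Then for every t ≥ 0, F_{m-1}(t) ≥ (φ'₋(t)/m) · F_m(t), where φ'₋(t) denotes the left derivative of φ at t (and the right derivative at t = 0). -/

import Mathlib

open MeasureTheory Filter Set

private lemma aux_tendsto (k : ℕ) (t A : ℝ) {c : ℝ} (hc : 0 < c) :
    Tendsto (fun r : ℝ => (r - t) ^ k * Real.exp (A - c * r)) atTop (nhds 0) := by
  have h2 : Tendsto (fun r : ℝ => c * (r - t)) atTop atTop := by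
    apply Tendsto.const_mul_atTop hc
    simpa [sub_eq_add_neg] using tendsto_atTop_add_const_right atTop (-t) tendsto_id
  have h3 := (Real.tendsto_pow_mul_exp_neg_atTop_nhds_zero k).comp h2
  have h4 := h3.const_mul ((1 / c ^ k) * Real.exp (A - c * t))
  rw [mul_zero] at h4
  refine h4.congr fun r => ?_
  simp only [Function.comp_apply]
  have hck : (c : ℝ) ^ k ≠ 0 := (pow_pos hc k).ne'
  have he : Real.exp (A - c * r) = Real.exp (A - c * t) * Real.exp (-(c * (r - t))) := by
    rw [← Real.exp_add]; ring_nf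
  rw [mul_pow, he]
  field_simp

private lemma aux_int (k : ℕ) (t A : ℝ) {c : ℝ} (hc : 0 < c) :
    IntegrableOn (fun r : ℝ => (r - t) ^ k * Real.exp (A - c * r)) (Ioi t) := by
  apply integrable_of_isBigO_exp_neg (half_pos hc) (Continuous.continuousOn (by continuity))
  apply Asymptotics.IsLittleO.isBigO
  apply Asymptotics.isLittleO_of_tendsto (fun x hx => absurd hx (Real.exp_ne_zero _))
  refine (aux_tendsto k t A (half_pos hc)).congr fun r => ?_
  rw [mul_div_assoc, ← Real.exp_sub]
  ring_nf

private lemma aux_key (φ : ℝ → ℝ) (hconv : ConvexOn ℝ (Set.Ici 0) φ) {t c : ℝ} (ht : 0 ≤ t)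
    (hslope : ∀ b, t < b → c ≤ (φ b - φ t) / (b - t)) :
    ∀ a b, t ≤ a → a ≤ b → c * (b - a) ≤ φ b - φ a := by
  intro a b hta hab
  rcases eq_or_lt_of_le hab with rfl | hab
  · simp
  rcases eq_or_lt_of_le hta with rfl | hta
  · have h := hslope b hab
    rwa [le_div_iff₀ (by linarith)] at h
  · have h1 := hslope a hta
    have h2 : (φ a - φ t) / (a - t) ≤ (φ b - φ a) / (b - a) :=
      hconv.slope_mono_adjacent ht (le_trans (le_trans ht hta.le) hab.le) hta hab
    have h := le_trans h1 h2
    rwa [le_div_iff₀ (by linarith)] at h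

theorem stmt8 (φ : ℝ → ℝ)
    (hmono : MonotoneOn φ (Set.Ici 0))
    (hconv : ConvexOn ℝ (Set.Ici 0) φ)
    (hnonneg : ∀ t ∈ Set.Ici (0 : ℝ), 0 ≤ φ t)
    (hnc : ∃ s t : ℝ, 0 ≤ s ∧ 0 ≤ t ∧ φ s ≠ φ t)
    (F : ℕ → ℝ → ℝ)
    (hF : ∀ m t, F m t = ∫ r in Set.Ioi t, (r - t) ^ m * Real.exp (-φ r))
    (φ' : ℝ → ℝ)
    (hφ'pos : ∀ t : ℝ, 0 < t → φ' t = derivWithin φ (Set.Iic t) t)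
    (hφ'zero : φ' 0 = derivWithin φ (Set.Ici 0) 0)
    (m : ℕ) (hm : 1 ≤ m) (t : ℝ) (ht : 0 ≤ t) :
    (φ' t / m) * F m t ≤ F (m - 1) t := by
  have hF0 : ∀ k : ℕ, 0 ≤ F k t := by
    intro k
    rw [hF]
    apply setIntegral_nonneg measurableSet_Ioi
    intro r hr
    have h0 : 0 ≤ r - t := by simp only [mem_Ioi] at hr; linarith
    positivity
  set c : ℝ := φ' t with hcdef
  rcases le_or_gt c 0 with hc | hc
  · have h1 : c / m ≤ 0 := div_nonpos_iff.2 (Or.inr ⟨hc, Nat.cast_nonneg m⟩)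
    exact le_trans (mul_nonpos_of_nonpos_of_nonneg h1 (hF0 m)) (hF0 (m - 1))
  -- main case : c > 0.  Step 1 : slope bound from the left derivative.
  have hslope : ∀ b, t < b → c ≤ (φ b - φ t) / (b - t) := by
    rcases eq_or_lt_of_le ht with rfl | ht'
    · -- t = 0, right derivative
      by_cases hd : DifferentiableWithinAt ℝ φ (Set.Ici 0) 0
      · intro b hb
        have hd' : HasDerivWithinAt φ c (Set.Ici 0) 0 := by
          rw [hcdef, hφ'zero]; exact hd.hasDerivWithinAt
        have h := hconv.le_slope_of_hasDerivWithinAt (le_refl (0:ℝ)) hb.le hb hd'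
        rwa [slope_def_field] at h
      · rw [hcdef, hφ'zero, derivWithin_zero_of_not_differentiableWithinAt hd] at hc
        exact absurd hc (lt_irrefl 0)
    · -- t > 0, left derivative
      by_cases hd : DifferentiableWithinAt ℝ φ (Set.Iic t) t
      · intro b hb
        have hd' : HasDerivWithinAt φ c (Set.Iic t) t := by
          rw [hcdef, hφ'pos t ht']; exact hd.hasDerivWithinAt
        have htend : Tendsto (slope φ t) (nhdsWithin t (Set.Iio t)) (nhds c) := by
          have h := hasDerivWithinAt_iff_tendsto_slope.mp hd'
          have hset : Set.Iic t \ {t} = Set.Iio t := by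
            ext x; simp [lt_iff_le_and_ne]
          rwa [hset] at h
        have hb' : c ≤ slope φ t b := by
          apply le_of_tendsto htend
          have h1 : ∀ᶠ u in nhdsWithin t (Set.Iio t), 0 < u :=
            eventually_nhdsWithin_of_eventually_nhds (eventually_gt_nhds ht')
          have h2 : ∀ᶠ u in nhdsWithin t (Set.Iio t), u < t :=
            eventually_mem_nhdsWithin
          filter_upwards [h1, h2] with u hu1 hu2
          rw [slope_def_field, slope_def_field]
          exact hconv.secant_mono ht hu1.le (le_trans ht hb.le)
            hu2.ne hb.ne' (hu2.le.trans hb.le)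
        rwa [slope_def_field] at hb'
      · rw [hcdef, hφ'pos t ht', derivWithin_zero_of_not_differentiableWithinAt hd] at hc
        exact absurd hc (lt_irrefl 0)
  have hkey : ∀ a b, t ≤ a → a ≤ b → c * (b - a) ≤ φ b - φ a := aux_key φ hconv ht hslope
  -- setup
  obtain ⟨n, rfl⟩ : ∃ n, m = n + 1 := ⟨m - 1, (Nat.succ_pred_eq_of_pos hm).symm⟩
  simp only [Nat.add_sub_cancel]
  set M : ℝ := (n : ℝ) + 1 with hMdef
  have hM : 0 < M := by positivity
  set s₀ : ℝ := t + M / c with hs₀def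
  have hts₀ : t < s₀ := by
    have : 0 < M / c := div_pos hM hc
    rw [hs₀def]; linarith
  set A : ℝ := -φ t + c * t with hAdef
  set B : ℝ := -φ s₀ + c * s₀ with hBdef
  have hcontφ : ContinuousOn φ (Set.Ioi t) := by
    have h := hconv.continuousOn_interior
    rw [interior_Ici] at h
    rcases eq_or_lt_of_le ht with rfl | ht'
    · exact h
    · exact h.mono (fun x hx => lt_trans ht' hx)
  -- integrability of (r-t)^k exp(-φ r)
  have hGk : ∀ k : ℕ, IntegrableOn (fun r : ℝ => (r - t) ^ k * Real.exp (-φ r)) (Ioi t) := by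
    intro k
    have hmeas : AEStronglyMeasurable (fun r : ℝ => (r - t) ^ k * Real.exp (-φ r))
        (volume.restrict (Ioi t)) := by
      apply ContinuousOn.aestronglyMeasurable _ measurableSet_Ioi
      exact (((continuous_id.sub continuous_const).pow k).continuousOn).mul
        (Real.continuous_exp.comp_continuousOn hcontφ.neg)
    apply MeasureTheory.Integrable.mono (aux_int k t A hc) hmeas
    rw [ae_restrict_iff' measurableSet_Ioi]
    refine ae_of_all _ fun r hr => ?_
    have hrt : t ≤ r := le_of_lt hr
    have h0 : 0 ≤ r - t := by linarith
    have h2 : -φ r ≤ A - c * r := by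
      have hk := hkey t r (le_refl t) hrt
      rw [mul_sub] at hk
      rw [hAdef]; linarith
    rw [Real.norm_eq_abs, Real.norm_eq_abs, abs_of_nonneg (by positivity),
      abs_of_nonneg (by positivity)]
    exact mul_le_mul_of_nonneg_left (Real.exp_le_exp.2 h2) (pow_nonneg h0 k)
  -- integrability of the two comparison functions
  have hψg_int : IntegrableOn
      (fun r : ℝ => (M * (r - t) ^ n - c * (r - t) ^ (n + 1)) * Real.exp (-φ r)) (Ioi t) := by
    have h := ((hGk n).const_mul M).sub ((hGk (n + 1)).const_mul c)
    exact h.congr (ae_of_all _ fun r => by simp only [Pi.sub_apply]; ring)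
  have hψh_int : IntegrableOn
      (fun r : ℝ => (M * (r - t) ^ n - c * (r - t) ^ (n + 1)) * Real.exp (B - c * r))
      (Ioi t) := by
    have h := ((aux_int n t B hc).const_mul M).sub ((aux_int (n + 1) t B hc).const_mul c)
    exact h.congr (ae_of_all _ fun r => by simp only [Pi.sub_apply]; ring)
  -- the comparison integral vanishes (FTC)
  have hB0 : ∫ r in Ioi t, (M * (r - t) ^ n - c * (r - t) ^ (n + 1)) * Real.exp (B - c * r)
      = 0 := by
    have hderiv : ∀ x ∈ Ioi t, HasDerivAt (fun r : ℝ => (r - t) ^ (n + 1) * Real.exp (B - c * r))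
        ((M * (x - t) ^ n - c * (x - t) ^ (n + 1)) * Real.exp (B - c * x)) x := by
      intro x _
      have h1 : HasDerivAt (fun r : ℝ => (r - t) ^ (n + 1))
          ((↑(n + 1) : ℝ) * (x - t) ^ n) x := by
        have h := ((hasDerivAt_id x).sub_const t).pow (n + 1)
        simpa [Pi.pow_def] using h
      have hl : HasDerivAt (fun r : ℝ => B - c * r) (-c) x := by
        simpa using ((hasDerivAt_id x).const_mul c).const_sub B
      have h2 := hl.exp
      have h : HasDerivAt (fun r : ℝ => (r - t) ^ (n + 1) * Real.exp (B - c * r)) _ x :=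
        h1.mul h2
      convert h using 1
      push_cast [hMdef]
      ring
    have hcont : ContinuousWithinAt (fun r : ℝ => (r - t) ^ (n + 1) * Real.exp (B - c * r))
        (Ici t) t := (Continuous.continuousWithinAt (by continuity))
    have h := integral_Ioi_of_hasDerivAt_of_tendsto hcont hderiv hψh_int
      (aux_tendsto (n + 1) t B hc)
    simpa using h
  -- pointwise comparison
  have hpt : ∀ r ∈ Ioi t,
      (M * (r - t) ^ n - c * (r - t) ^ (n + 1)) * Real.exp (B - c * r)
        ≤ (M * (r - t) ^ n - c * (r - t) ^ (n + 1)) * Real.exp (-φ r) := by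
    intro r hr
    have hrt : t < r := hr
    have h0 : 0 ≤ r - t := by linarith
    have heq : M * (r - t) ^ n - c * (r - t) ^ (n + 1) = (r - t) ^ n * (M - c * (r - t)) := by
      ring
    rcases le_total r s₀ with hle | hge
    · have hcrt : c * (r - t) ≤ M := by
        have h1 : r - t ≤ M / c := by rw [hs₀def] at hle; linarith
        have h2 := (le_div_iff₀ hc).mp h1
        linarith [mul_comm c (r - t)]
      have hψ : 0 ≤ M * (r - t) ^ n - c * (r - t) ^ (n + 1) := by
        rw [heq]
        exact mul_nonneg (pow_nonneg h0 n) (by linarith)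
      have hexp : Real.exp (B - c * r) ≤ Real.exp (-φ r) := by
        apply Real.exp_le_exp.2
        have hk := hkey r s₀ hrt.le hle
        rw [mul_sub] at hk
        rw [hBdef]; linarith
      exact mul_le_mul_of_nonneg_left hexp hψ
    · have hcrt : M ≤ c * (r - t) := by
        have h1 : M / c ≤ r - t := by rw [hs₀def] at hge; linarith
        have h2 := (div_le_iff₀ hc).mp h1
        linarith [mul_comm c (r - t)]
      have hψ : M * (r - t) ^ n - c * (r - t) ^ (n + 1) ≤ 0 := by
        rw [heq]
        exact mul_nonpos_of_nonneg_of_nonpos (pow_nonneg h0 n) (by linarith)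
      have hexp : Real.exp (-φ r) ≤ Real.exp (B - c * r) := by
        apply Real.exp_le_exp.2
        have hk := hkey s₀ r hts₀.le hge
        rw [mul_sub] at hk
        rw [hBdef]; linarith
      exact mul_le_mul_of_nonpos_left hexp hψ
  have hAB := setIntegral_mono_on hψh_int hψg_int measurableSet_Ioi hpt
  rw [hB0] at hAB
  have hsplit : ∫ r in Ioi t, (M * (r - t) ^ n - c * (r - t) ^ (n + 1)) * Real.exp (-φ r)
      = M * F n t - c * F (n + 1) t := by
    rw [hF, hF, ← integral_const_mul, ← integral_const_mul,
      ← integral_sub ((hGk n).const_mul M) ((hGk (n + 1)).const_mul c)]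
    exact integral_congr_ae (ae_of_all _ fun r => by ring)
  rw [hsplit] at hAB
  rw [div_mul_eq_mul_div, div_le_iff₀ (by positivity : (0:ℝ) < ((n + 1 : ℕ) : ℝ))]
  push_cast
  rw [hMdef] at hAB
  linarith [hAB]
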